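/- Let G be a connected graph and let k be an integer with 1 ≤ k < v(G)/2. Then there are at most ⌊v(G)/(k+1)⌋ vertices v of G such that G − v has a connected component with exactly k vertices. -/

import Mathlib

open SimpleGraph

/-- The vertex-deleted subgraph `G - v`: the induced subgraph on the remaining vertices. -/
def deleteVert {V : Type*} (G : SimpleGraph V) (v : V) : SimpleGraph {w : V // w ≠ v} :=
  G.induce {w : V | w ≠ v}

/-- `G` contains a cycle. -/
def HasCycleG {V : Type*} (G : SimpleGraph V) : Prop :=
  ∃ (u : V) (c : G.Walk u u), c.IsCycle

/-- `G` contains at least two distinct cycles (distinct as subgraphs,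
i.e. with different edge sets). -/
def TwoCycles {V : Type*} (G : SimpleGraph V) : Prop :=
  ∃ (u v : V) (c : G.Walk u u) (c' : G.Walk v v),
    c.IsCycle ∧ c'.IsCycle ∧ ¬ (∀ e, e ∈ c.edges ↔ e ∈ c'.edges)

/-- `G` contains exactly one cycle: it has a cycle, and any two cycles are equal
as subgraphs (have the same edge set). -/
def Unicyclic {V : Type*} (G : SimpleGraph V) : Prop :=
  HasCycleG G ∧ ∀ (u v : V) (c : G.Walk u u) (c' : G.Walk v v),
    c.IsCycle → c'.IsCycle → ∀ e, e ∈ c.edges ↔ e ∈ c'.edges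

/-- `F` and `G` have at least `k` common cards, i.e. the multiset intersection of their
decks has size at least `k`: there are `k` distinct vertices of `F` and `k` distinct
vertices of `G` whose corresponding vertex-deleted subgraphs are pairwise isomorphic. -/
def CommonCards {V W : Type*} (F : SimpleGraph V) (G : SimpleGraph W) (k : ℕ) : Prop :=
  ∃ (f : Fin k ↪ V) (g : Fin k ↪ W),
    ∀ i, Nonempty (deleteVert F (f i) ≃g deleteVert G (g i))

section Aux
variable {V : Type*} {G : SimpleGraph V}

/-- lift a walk in `G` avoiding a set's complement into the induced graph -/
lemma reach_induce {s : Set V} {a b : V} (p : G.Walk a b)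
    (hp : ∀ x ∈ p.support, x ∈ s) (ha : a ∈ s) (hb : b ∈ s) :
    (G.induce s).Reachable ⟨a, ha⟩ ⟨b, hb⟩ := by
  induction p with
  | nil => exact Reachable.refl _
  | @cons x y z h p ih =>
      have hy : y ∈ s := hp y (by simp)
      have hadj : (G.induce s).Adj ⟨x, ha⟩ ⟨y, hy⟩ := h
      exact hadj.reachable.trans (ih (fun z hz => hp z (by simp [hz])) hy hb)

/-- The component of `G - v` as a set of vertices of `G`. -/
def CS (G : SimpleGraph V) (v : V) (c : (deleteVert G v).ConnectedComponent) : Set V :=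
  Subtype.val '' c.supp

lemma mem_CS {v x : V} {c : (deleteVert G v).ConnectedComponent} :
    x ∈ CS G v c ↔ ∃ hx : x ≠ v, (deleteVert G v).connectedComponentMk ⟨x, hx⟩ = c := by
  constructor
  · rintro ⟨⟨y, hy⟩, hmem, rfl⟩
    exact ⟨hy, (ConnectedComponent.mem_supp_iff _ _).mp hmem⟩
  · rintro ⟨hx, h⟩
    exact ⟨⟨x, hx⟩, (ConnectedComponent.mem_supp_iff _ _).mpr h, rfl⟩

lemma not_mem_CS_self {v : V} {c : (deleteVert G v).ConnectedComponent} : v ∉ CS G v c := by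
  rintro ⟨⟨y, hy⟩, _, h⟩; exact hy h

lemma CS_closure {v x y : V} {c : (deleteVert G v).ConnectedComponent}
    (hx : x ∈ CS G v c) (hy : y ∉ CS G v c) (hyv : y ≠ v) : ¬ G.Adj x y := by
  intro hadj
  obtain ⟨hxv, hxc⟩ := mem_CS.mp hx
  have hadj' : (deleteVert G v).Adj ⟨x, hxv⟩ ⟨y, hyv⟩ := hadj
  exact hy (mem_CS.mpr ⟨hyv, (ConnectedComponent.sound hadj'.symm.reachable).trans hxc⟩)

/-- two vertices of a component are joined by a walk inside the component -/
lemma CS_walk {v x y : V} {c : (deleteVert G v).ConnectedComponent}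
    (hx : x ∈ CS G v c) (hy : y ∈ CS G v c) :
    ∃ p : G.Walk x y, ∀ z ∈ p.support, z ∈ CS G v c := by
  classical
  obtain ⟨hxv, hxc⟩ := mem_CS.mp hx
  obtain ⟨hyv, hyc⟩ := mem_CS.mp hy
  obtain ⟨q⟩ := ConnectedComponent.exact (hxc.trans hyc.symm)
  refine ⟨q.map ⟨Subtype.val, fun h => h⟩, ?_⟩
  intro z hz
  rw [Walk.support_map, List.mem_map] at hz
  obtain ⟨z', hz', rfl⟩ := hz
  refine mem_CS.mpr ⟨z'.2, ?_⟩
  have : (deleteVert G v).Reachable ⟨x, hxv⟩ z' := (q.takeUntil z' hz').reachable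
  exact (ConnectedComponent.sound this).symm.trans hxc

/-- From any vertex outside a component, there is a walk to `v` avoiding the component. -/
lemma avoid_walk_aux {v : V} {c : (deleteVert G v).ConnectedComponent} :
    ∀ {x w : V} (_ : G.Walk x w), v = w → x ∉ CS G v c →
      ∃ q : G.Walk x v, ∀ z ∈ q.support, z ∉ CS G v c := by
  intro x w p
  induction p with
  | nil => rintro rfl hx; exact ⟨Walk.nil, by simp [not_mem_CS_self]⟩
  | @cons a b d h p ih =>
      rintro rfl hx
      by_cases hav : a = v
      · subst hav; exact ⟨Walk.nil, by simp [not_mem_CS_self]⟩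
      · by_cases hb : b ∈ CS G v c
        · exact absurd h.symm (CS_closure hb hx hav)
        · obtain ⟨q, hq⟩ := ih rfl hb
          refine ⟨q.cons h, ?_⟩
          intro z hz
          rcases List.mem_cons.mp (by simpa using hz) with rfl | hz'
          · exact hx
          · exact hq z hz'

lemma avoid_walk (hG : G.Connected) {v : V} {c : (deleteVert G v).ConnectedComponent}
    {x : V} (hx : x ∉ CS G v c) :
    ∃ q : G.Walk x v, ∀ z ∈ q.support, z ∉ CS G v c := by
  obtain ⟨p⟩ := hG.preconnected x v
  exact avoid_walk_aux p rfl hx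

lemma CS_ncard {v : V} [Fintype V] {c : (deleteVert G v).ConnectedComponent} :
    (CS G v c).ncard = Nat.card c.supp := by
  rw [CS, Set.ncard_image_of_injective _ Subtype.val_injective, Nat.card_coe_set_eq]

end Aux

section Main
variable {V : Type*} [Fintype V] {G : SimpleGraph V}

lemma lemA (hG : G.Connected) {k : ℕ} (hk2 : 2 * k < Fintype.card V)
    {v u : V} {c : (deleteVert G v).ConnectedComponent} (hc : Nat.card c.supp = k)
    (hu : u ∈ CS G v c) (c' : (deleteVert G u).ConnectedComponent) :
    Nat.card c'.supp ≠ k := by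
  classical
  intro hc'
  have huv : u ≠ v := fun h => not_mem_CS_self (h ▸ hu)
  have key : ∀ x (hx : x ∉ CS G v c) (hxu : x ≠ u),
      (deleteVert G u).connectedComponentMk ⟨x, hxu⟩ =
      (deleteVert G u).connectedComponentMk ⟨v, Ne.symm huv⟩ := by
    intro x hx hxu
    obtain ⟨q, hq⟩ := avoid_walk hG hx
    exact ConnectedComponent.sound
      (reach_induce q (fun z hz (h : z = u) => (hq z hz) (h ▸ hu)) hxu (Ne.symm huv))
  have hCS : (CS G v c).ncard = k := CS_ncard.trans hc
  have hCS' : (CS G u c').ncard = k := CS_ncard.trans hc'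
  have hk0 : 0 < k := hCS ▸ (Set.ncard_pos (Set.toFinite _)).mpr ⟨u, hu⟩
  by_cases hcc : c' = (deleteVert G u).connectedComponentMk ⟨v, Ne.symm huv⟩
  · have hsub : (CS G v c)ᶜ ⊆ CS G u c' := by
      intro x hx
      have hxu : x ≠ u := fun h => hx (h ▸ hu)
      exact mem_CS.mpr ⟨hxu, (key x hx hxu).trans hcc.symm⟩
    have h1 : (CS G v c)ᶜ.ncard ≤ (CS G u c').ncard :=
      Set.ncard_le_ncard hsub (Set.toFinite _)
    have h2 : (CS G v c).ncard + (CS G v c)ᶜ.ncard = Nat.card V :=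
      Set.ncard_add_ncard_compl _
    rw [Nat.card_eq_fintype_card] at h2
    omega
  · have hsub : CS G u c' ⊆ CS G v c \ {u} := by
      intro x hx
      obtain ⟨hxu, hxc'⟩ := mem_CS.mp hx
      refine ⟨?_, hxu⟩
      by_contra hxv
      exact hcc (hxc'.symm.trans (key x hxv hxu))
    have h1 : (CS G u c').ncard ≤ (CS G v c \ {u}).ncard :=
      Set.ncard_le_ncard hsub (Set.toFinite _)
    have h2 : (CS G v c \ {u}).ncard = (CS G v c).ncard - 1 :=
      Set.ncard_diff_singleton_of_mem hu
    omega

lemma lemB (hG : G.Connected) {u v : V} {c : (deleteVert G v).ConnectedComponent}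
    {c' : (deleteVert G u).ConnectedComponent} (huv : u ≠ v)
    (hu : u ∉ CS G v c) (hv : v ∉ CS G u c') :
    Disjoint (CS G v c) (CS G u c') := by
  classical
  rw [Set.disjoint_left]
  intro w hw hw'
  -- first: the two components are equal as vertex sets
  have hsub1 : CS G u c' ⊆ CS G v c := by
    intro x hx
    obtain ⟨p, hp⟩ := CS_walk hw' hx
    have hwv : w ≠ v := fun h => hv (h ▸ hw')
    have hxv : x ≠ v := fun h => hv (h ▸ hx)
    have hre := reach_induce (s := {z : V | z ≠ v}) p
      (fun z hz (h : z = v) => hv (h ▸ hp z hz)) hwv hxv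
    obtain ⟨_, hwc⟩ := mem_CS.mp hw
    exact mem_CS.mpr ⟨hxv, ((ConnectedComponent.sound hre).symm.trans hwc)⟩
  have hsub2 : CS G v c ⊆ CS G u c' := by
    intro x hx
    obtain ⟨p, hp⟩ := CS_walk hw hx
    have hwu : w ≠ u := fun h => hu (h ▸ hw)
    have hxu : x ≠ u := fun h => hu (h ▸ hx)
    have hre := reach_induce (s := {z : V | z ≠ u}) p
      (fun z hz (h : z = u) => hu (h ▸ hp z hz)) hwu hxu
    obtain ⟨_, hwc⟩ := mem_CS.mp hw'
    exact mem_CS.mpr ⟨hxu, ((ConnectedComponent.sound hre).symm.trans hwc)⟩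
  have heq : CS G v c = CS G u c' := Set.Subset.antisymm hsub2 hsub1
  -- boundary dart
  obtain ⟨p⟩ := hG.preconnected w v
  obtain ⟨d, _, hd1, hd2⟩ := p.exists_boundary_dart (CS G v c) hw not_mem_CS_self
  have hadj : G.Adj d.fst d.snd := d.adj
  have h1 : d.snd = v := by
    by_contra h
    exact CS_closure hd1 hd2 h hadj
  have h2 : d.snd = u := by
    by_contra h
    exact CS_closure (heq ▸ hd1) (fun hm => hd2 (heq ▸ hm)) h hadj
  exact huv (h2.symm.trans h1)

end Main


/-- If `G` is a connected graph and `1 ≤ k < v(G)/2`, then at most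
`⌊v(G)/(k+1)⌋` vertices `v` of `G` are such that `G - v` has a connected component with
exactly `k` vertices. -/
theorem stmt11 {V : Type*} [Fintype V] (G : SimpleGraph V) (hG : G.Connected)
    (k : ℕ) (hk1 : 1 ≤ k) (hk2 : 2 * k < Fintype.card V) :
    {v : V | ∃ c : (deleteVert G v).ConnectedComponent, Nat.card c.supp = k}.ncard ≤
      Fintype.card V / (k + 1) := by
  classical
  set S := {v : V | ∃ c : (deleteVert G v).ConnectedComponent, Nat.card c.supp = k} with hSdef
  have hmemS : ∀ v, v ∈ S → ∃ c : (deleteVert G v).ConnectedComponent, Nat.card c.supp = k :=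
    fun v hv => hv
  set D : V → Set V := fun v =>
    if h : v ∈ S then insert v (CS G v (Exists.choose (hmemS v h))) else ∅ with hDdef
  have hDeq : ∀ v (hv : v ∈ S), D v = insert v (CS G v (Exists.choose (hmemS v hv))) := by
    intro v hv
    rw [hDdef]
    exact dif_pos hv
  have hcardD : ∀ v ∈ S, (D v).ncard = k + 1 := by
    intro v hv
    rw [hDeq v hv,
      Set.ncard_insert_of_notMem not_mem_CS_self (Set.toFinite _),
      CS_ncard, (hmemS v hv).choose_spec]
  have hdisj : ∀ u ∈ S, ∀ v ∈ S, u ≠ v → Disjoint (D u) (D v) := by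
    intro u hu v hv huv
    have hA1 : u ∉ CS G v (Exists.choose (hmemS v hv)) := fun h =>
      lemA hG hk2 (hmemS v hv).choose_spec h _ (hmemS u hu).choose_spec
    have hA2 : v ∉ CS G u (Exists.choose (hmemS u hu)) := fun h =>
      lemA hG hk2 (hmemS u hu).choose_spec h _ (hmemS v hv).choose_spec
    have hB := lemB hG huv hA1 hA2
    rw [hDeq u hu, hDeq v hv, Set.disjoint_left]
    rintro x hx hx'
    rcases hx with rfl | hx
    · rcases hx' with rfl | hx'
      · exact huv rfl
      · exact hA1 hx'
    · rcases hx' with rfl | hx'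
      · exact hA2 hx
      · exact Set.disjoint_left.mp hB hx' hx
  have hfin : S.Finite := Set.toFinite _
  set t : Finset V := hfin.toFinset with htdef
  set E : V → Finset V := fun v => (D v).toFinite.toFinset with hEdef
  have hdisj' : ∀ u ∈ t, ∀ v ∈ t, u ≠ v → Disjoint (E u) (E v) := by
    intro u hu v hv huv
    rw [hEdef]
    simp only [Set.Finite.disjoint_toFinset]
    exact hdisj u (hfin.mem_toFinset.mp hu) v (hfin.mem_toFinset.mp hv) huv
  have hmul : t.card * (k + 1) ≤ Fintype.card V := by
    calc t.card * (k + 1) = ∑ _v ∈ t, (k + 1) := by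
          rw [Finset.sum_const, smul_eq_mul]
      _ = ∑ v ∈ t, (E v).card := by
          refine Finset.sum_congr rfl fun v hv => ?_
          rw [hEdef]
          rw [← Set.ncard_eq_toFinset_card (D v) (D v).toFinite]
          exact (hcardD v (hfin.mem_toFinset.mp hv)).symm
      _ = (t.biUnion E).card := (Finset.card_biUnion hdisj').symm
      _ ≤ Fintype.card V := by
          rw [← Finset.card_univ]
          exact Finset.card_le_card (Finset.subset_univ _)
  have hScard : S.ncard = t.card := Set.ncard_eq_toFinset_card S hfin
  rw [hScard]
  exact (Nat.le_div_iff_mul_le (Nat.succ_pos k)).mpr hmul
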